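/- Let n and ℓ be nonnegative integers and set M̃² := 4·(n+ℓ+1)·(n+ℓ+2). Define the terminating hypergeometric polynomial F(x) := Σ_{j=0}^{n} [ (−(n+ℓ+1))_j · (−n)_j / ( (ℓ+2)_j · j! ) ] · x^j, where (a)_j := ∏_{i=0}^{j−1}(a+i) is the rising factorial, and define ζ : (0,∞) → ℝ by ζ(y) := y^ℓ · (y²+1)^{−(n+ℓ+1)} · F(−y²). Then for all y > 0, ζ''(y) + (3/y)·ζ'(y) + ( M̃²/(1+y²)² − ℓ(ℓ+2)/y² )·ζ(y) = 0. -/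

import Mathlib

/-- The terminating Gauss hypergeometric polynomial
`₂F₁(−(n+ℓ+1), −n; ℓ+2; x) = Σ_{j=0}^n ((−(n+ℓ+1))_j (−n)_j / ((ℓ+2)_j j!)) x^j`,
where `(a)_j = ∏_{i<j} (a+i)` is the rising factorial. -/
noncomputable def hyperF (n l : ℕ) (x : ℝ) : ℝ :=
  ∑ j ∈ Finset.range (n + 1),
    ((∏ i ∈ Finset.range j, (-((n : ℝ) + (l : ℝ) + 1) + (i : ℝ))) *
        (∏ i ∈ Finset.range j, (-(n : ℝ) + (i : ℝ))) /
        ((∏ i ∈ Finset.range j, ((l : ℝ) + 2 + (i : ℝ))) * (Nat.factorial j : ℝ))) *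
      x ^ j

/-- The regular radial meson solution `ζ(y) = y^ℓ (y²+1)^{−(n+ℓ+1)} ₂F₁(…; −y²)`. -/
noncomputable def zetaSol (n l : ℕ) (y : ℝ) : ℝ :=
  y ^ l * ((y ^ 2 + 1) ^ (n + l + 1))⁻¹ * hyperF n l (-y ^ 2)


noncomputable def cf (n l j : ℕ) : ℝ :=
  (∏ i ∈ Finset.range j, (-((n : ℝ) + (l : ℝ) + 1) + (i : ℝ))) *
    (∏ i ∈ Finset.range j, (-(n : ℝ) + (i : ℝ))) /
    ((∏ i ∈ Finset.range j, ((l : ℝ) + 2 + (i : ℝ))) * (Nat.factorial j : ℝ))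

noncomputable def dcoef (n l j : ℕ) : ℝ := (-1 : ℝ) ^ j * cf n l j

lemma cprod_pos (l j : ℕ) : 0 < ∏ i ∈ Finset.range j, ((l : ℝ) + 2 + (i : ℝ)) := by
  apply Finset.prod_pos; intro i _; positivity

lemma cf_rec (n l j : ℕ) :
    ((j : ℝ) + 1) * ((l : ℝ) + 2 + (j : ℝ)) * cf n l (j + 1) =
      (-((n : ℝ) + (l : ℝ) + 1) + (j : ℝ)) * (-(n : ℝ) + (j : ℝ)) * cf n l j := by
  unfold cf
  rw [Finset.prod_range_succ, Finset.prod_range_succ, Finset.prod_range_succ,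
    Nat.factorial_succ]
  have h1 := (cprod_pos l j).ne'
  have h2 : (Nat.factorial j : ℝ) ≠ 0 := Nat.cast_ne_zero.2 (Nat.factorial_ne_zero j)
  have h3 : ((l : ℝ) + 2 + (j : ℝ)) ≠ 0 := by positivity
  have h4 : ((j : ℝ) + 1) ≠ 0 := by positivity
  field_simp
  push_cast
  ring

lemma dcoef_rec (n l j : ℕ) :
    4 * ((j : ℝ) + 1) * ((j : ℝ) + (l : ℝ) + 2) * dcoef n l (j + 1) =
      -(4 * (-((n : ℝ) + (l : ℝ) + 1) + (j : ℝ)) * (-(n : ℝ) + (j : ℝ))) * dcoef n l j := by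
  unfold dcoef
  rw [pow_succ]
  linear_combination (-4 : ℝ) * (-1 : ℝ) ^ j * cf_rec n l j

lemma base_deriv (m q : ℤ) {y : ℝ} (hy : y ≠ 0) :
    HasDerivAt (fun x : ℝ => x ^ m * (x ^ 2 + 1) ^ q)
      ((m : ℝ) * y ^ (m - 1) * (y ^ 2 + 1) ^ q +
        2 * (q : ℝ) * y ^ (m + 1) * ((y ^ 2 + 1) ^ (q - 1))) y := by
  have hu : (y ^ 2 + 1 : ℝ) ≠ 0 := by positivity
  have h1 : HasDerivAt (fun x : ℝ => x ^ m) ((m : ℝ) * y ^ (m - 1)) y :=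
    hasDerivAt_zpow m y (Or.inl hy)
  have hin : HasDerivAt (fun x : ℝ => x ^ 2 + 1) (2 * y) y := by
    simpa using (hasDerivAt_pow 2 y).add_const 1
  have h2 : HasDerivAt (fun x : ℝ => (x ^ 2 + 1) ^ q)
      ((q : ℝ) * (y ^ 2 + 1) ^ (q - 1) * (2 * y)) y :=
    (hasDerivAt_zpow q (y ^ 2 + 1) (Or.inl hu)).comp (h := fun x : ℝ => x ^ 2 + 1) y hin
  have := h1.fun_mul h2
  refine this.congr_deriv ?_
  rw [zpow_add_one₀ hy m]
  ring

noncomputable def Zfun (n l : ℕ) (y : ℝ) : ℝ :=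
  ∑ j ∈ Finset.range (n + 1), dcoef n l j *
    (y ^ (2 * (j : ℤ) + (l : ℤ)) * (y ^ 2 + 1) ^ (-((n : ℤ) + (l : ℤ) + 1)))

noncomputable def Z1 (n l : ℕ) (y : ℝ) : ℝ :=
  ∑ j ∈ Finset.range (n + 1), dcoef n l j *
    (((2 * (j : ℤ) + (l : ℤ) : ℤ) : ℝ) *
        (y ^ (2 * (j : ℤ) + (l : ℤ) - 1) * (y ^ 2 + 1) ^ (-((n : ℤ) + (l : ℤ) + 1))) +
      (2 * ((-((n : ℤ) + (l : ℤ) + 1) : ℤ) : ℝ)) *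
        (y ^ (2 * (j : ℤ) + (l : ℤ) + 1) * (y ^ 2 + 1) ^ (-((n : ℤ) + (l : ℤ) + 1) - 1)))

noncomputable def Z2 (n l : ℕ) (y : ℝ) : ℝ :=
  ∑ j ∈ Finset.range (n + 1), dcoef n l j *
    ((2 * (j : ℝ) + (l : ℝ)) * (2 * (j : ℝ) + (l : ℝ) - 1) *
        (y ^ (2 * (j : ℤ) + (l : ℤ) - 2) * (y ^ 2 + 1) ^ (-((n : ℤ) + (l : ℤ) + 1))) +
      2 * (-((n : ℝ) + (l : ℝ) + 1)) * (2 * (2 * (j : ℝ) + (l : ℝ)) + 1) *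
        (y ^ (2 * (j : ℤ) + (l : ℤ)) * (y ^ 2 + 1) ^ (-((n : ℤ) + (l : ℤ) + 1) - 1)) +
      4 * (-((n : ℝ) + (l : ℝ) + 1)) * (-((n : ℝ) + (l : ℝ) + 1) - 1) *
        (y ^ (2 * (j : ℤ) + (l : ℤ) + 2) * (y ^ 2 + 1) ^ (-((n : ℤ) + (l : ℤ) + 1) - 2)))

lemma hasDerivAt_Zfun (n l : ℕ) {y : ℝ} (hy : y ≠ 0) :
    HasDerivAt (Zfun n l) (Z1 n l y) y := by
  have h : HasDerivAt (Zfun n l)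
      (∑ j ∈ Finset.range (n + 1), dcoef n l j *
        (((2 * (j : ℤ) + (l : ℤ) : ℤ) : ℝ) * y ^ (2 * (j : ℤ) + (l : ℤ) - 1) *
            (y ^ 2 + 1) ^ (-((n : ℤ) + (l : ℤ) + 1)) +
          2 * ((-((n : ℤ) + (l : ℤ) + 1) : ℤ) : ℝ) * y ^ (2 * (j : ℤ) + (l : ℤ) + 1) *
            (y ^ 2 + 1) ^ (-((n : ℤ) + (l : ℤ) + 1) - 1))) y :=
    HasDerivAt.fun_sum fun j _ =>
      (base_deriv (2 * (j : ℤ) + (l : ℤ)) (-((n : ℤ) + (l : ℤ) + 1)) hy).const_mul _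
  convert h using 1
  apply Finset.sum_congr rfl
  intro j _
  ring

lemma hasDerivAt_Z1 (n l : ℕ) {y : ℝ} (hy : y ≠ 0) :
    HasDerivAt (Z1 n l) (Z2 n l y) y := by
  have h : HasDerivAt (Z1 n l)
      (∑ j ∈ Finset.range (n + 1), dcoef n l j *
        (((2 * (j : ℤ) + (l : ℤ) : ℤ) : ℝ) *
            ((((2 * (j : ℤ) + (l : ℤ) - 1 : ℤ)) : ℝ) * y ^ (2 * (j : ℤ) + (l : ℤ) - 1 - 1) *
                (y ^ 2 + 1) ^ (-((n : ℤ) + (l : ℤ) + 1)) +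
              2 * ((-((n : ℤ) + (l : ℤ) + 1) : ℤ) : ℝ) * y ^ (2 * (j : ℤ) + (l : ℤ) - 1 + 1) *
                (y ^ 2 + 1) ^ (-((n : ℤ) + (l : ℤ) + 1) - 1)) +
          (2 * ((-((n : ℤ) + (l : ℤ) + 1) : ℤ) : ℝ)) *
            ((((2 * (j : ℤ) + (l : ℤ) + 1 : ℤ)) : ℝ) * y ^ (2 * (j : ℤ) + (l : ℤ) + 1 - 1) *
                (y ^ 2 + 1) ^ (-((n : ℤ) + (l : ℤ) + 1) - 1) +
              2 * ((-((n : ℤ) + (l : ℤ) + 1) - 1 : ℤ) : ℝ) * y ^ (2 * (j : ℤ) + (l : ℤ) + 1 + 1) *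
                (y ^ 2 + 1) ^ (-((n : ℤ) + (l : ℤ) + 1) - 1 - 1))) ) y :=
    HasDerivAt.fun_sum fun j _ =>
      (((base_deriv (2 * (j : ℤ) + (l : ℤ) - 1) (-((n : ℤ) + (l : ℤ) + 1)) hy).const_mul
          ((2 * (j : ℤ) + (l : ℤ) : ℤ) : ℝ)).add
        ((base_deriv (2 * (j : ℤ) + (l : ℤ) + 1) (-((n : ℤ) + (l : ℤ) + 1) - 1) hy).const_mul
          (2 * ((-((n : ℤ) + (l : ℤ) + 1) : ℤ) : ℝ)))).const_mul (dcoef n l j)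
  convert h using 1
  apply Finset.sum_congr rfl
  intro j _
  rw [show (2 * (j : ℤ) + (l : ℤ) - 1 - 1) = 2 * (j : ℤ) + (l : ℤ) - 2 from by ring,
    show (2 * (j : ℤ) + (l : ℤ) - 1 + 1) = 2 * (j : ℤ) + (l : ℤ) from by ring,
    show (2 * (j : ℤ) + (l : ℤ) + 1 - 1) = 2 * (j : ℤ) + (l : ℤ) from by ring,
    show (2 * (j : ℤ) + (l : ℤ) + 1 + 1) = 2 * (j : ℤ) + (l : ℤ) + 2 from by ring,
    show (-((n : ℤ) + (l : ℤ) + 1) - 1 - 1) = -((n : ℤ) + (l : ℤ) + 1) - 2 from by ring]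
  push_cast
  ring

noncomputable def Gf (n l j : ℕ) (y : ℝ) : ℝ :=
  4 * (j : ℝ) * ((j : ℝ) + (l : ℝ) + 1) * dcoef n l j *
    (y ^ (2 * (j : ℤ) + (l : ℤ) - 2) * (y ^ 2 + 1) ^ (-((n : ℤ) + (l : ℤ) + 1) - 1))

lemma Gf_succ (n l j : ℕ) (y : ℝ) :
    Gf n l (j + 1) y =
      -(4 * (-((n : ℝ) + (l : ℝ) + 1) + (j : ℝ)) * (-(n : ℝ) + (j : ℝ))) * dcoef n l j *
        (y ^ (2 * (j : ℤ) + (l : ℤ)) * (y ^ 2 + 1) ^ (-((n : ℤ) + (l : ℤ) + 1) - 1)) := by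
  unfold Gf
  push_cast
  rw [show (2 * ((j : ℤ) + 1) + (l : ℤ) - 2) = 2 * (j : ℤ) + (l : ℤ) from by ring]
  linear_combination
    (y ^ (2 * (j : ℤ) + (l : ℤ)) * (y ^ 2 + 1) ^ (-((n : ℤ) + (l : ℤ) + 1) - 1)) *
      dcoef_rec n l j

lemma key_identity (n l j : ℕ) {y : ℝ} (hy : 0 < y) :
    dcoef n l j *
        ((2 * (j : ℝ) + (l : ℝ)) * (2 * (j : ℝ) + (l : ℝ) - 1) *
            (y ^ (2 * (j : ℤ) + (l : ℤ) - 2) * (y ^ 2 + 1) ^ (-((n : ℤ) + (l : ℤ) + 1))) +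
          2 * (-((n : ℝ) + (l : ℝ) + 1)) * (2 * (2 * (j : ℝ) + (l : ℝ)) + 1) *
            (y ^ (2 * (j : ℤ) + (l : ℤ)) * (y ^ 2 + 1) ^ (-((n : ℤ) + (l : ℤ) + 1) - 1)) +
          4 * (-((n : ℝ) + (l : ℝ) + 1)) * (-((n : ℝ) + (l : ℝ) + 1) - 1) *
            (y ^ (2 * (j : ℤ) + (l : ℤ) + 2) * (y ^ 2 + 1) ^ (-((n : ℤ) + (l : ℤ) + 1) - 2))) +
      3 / y * (dcoef n l j *
        (((2 * (j : ℤ) + (l : ℤ) : ℤ) : ℝ) *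
            (y ^ (2 * (j : ℤ) + (l : ℤ) - 1) * (y ^ 2 + 1) ^ (-((n : ℤ) + (l : ℤ) + 1))) +
          (2 * ((-((n : ℤ) + (l : ℤ) + 1) : ℤ) : ℝ)) *
            (y ^ (2 * (j : ℤ) + (l : ℤ) + 1) * (y ^ 2 + 1) ^ (-((n : ℤ) + (l : ℤ) + 1) - 1)))) +
      ((4 * ((n : ℝ) + (l : ℝ) + 1) * ((n : ℝ) + (l : ℝ) + 2)) / (1 + y ^ 2) ^ 2 -
          ((l : ℝ) * ((l : ℝ) + 2)) / y ^ 2) *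
        (dcoef n l j *
          (y ^ (2 * (j : ℤ) + (l : ℤ)) * (y ^ 2 + 1) ^ (-((n : ℤ) + (l : ℤ) + 1)))) =
      Gf n l j y - Gf n l (j + 1) y := by
  have hy0 : y ≠ 0 := hy.ne'
  have hu : (y ^ 2 + 1 : ℝ) ≠ 0 := by positivity
  rw [Gf_succ]
  unfold Gf
  have hA : y ^ (2 * (j : ℤ) + (l : ℤ)) = y ^ (2 * (j : ℤ) + (l : ℤ) - 2) * (y * y) := by
    rw [show (2 * (j : ℤ) + (l : ℤ)) = (2 * (j : ℤ) + (l : ℤ) - 2) + 1 + 1 from by ring,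
      zpow_add_one₀ hy0, zpow_add_one₀ hy0]
    ring
  have hB : y ^ (2 * (j : ℤ) + (l : ℤ) - 1) = y ^ (2 * (j : ℤ) + (l : ℤ) - 2) * y := by
    rw [show (2 * (j : ℤ) + (l : ℤ) - 1) = (2 * (j : ℤ) + (l : ℤ) - 2) + 1 from by ring,
      zpow_add_one₀ hy0]
  have hC : y ^ (2 * (j : ℤ) + (l : ℤ) + 1) =
      y ^ (2 * (j : ℤ) + (l : ℤ) - 2) * (y * y * y) := by
    rw [show (2 * (j : ℤ) + (l : ℤ) + 1) = (2 * (j : ℤ) + (l : ℤ) - 2) + 1 + 1 + 1 from by ring,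
      zpow_add_one₀ hy0, zpow_add_one₀ hy0, zpow_add_one₀ hy0]
    ring
  have hD : y ^ (2 * (j : ℤ) + (l : ℤ) + 2) =
      y ^ (2 * (j : ℤ) + (l : ℤ) - 2) * (y * y * y * y) := by
    rw [show (2 * (j : ℤ) + (l : ℤ) + 2) =
        (2 * (j : ℤ) + (l : ℤ) - 2) + 1 + 1 + 1 + 1 from by ring,
      zpow_add_one₀ hy0, zpow_add_one₀ hy0, zpow_add_one₀ hy0, zpow_add_one₀ hy0]
    ring
  have hU0 : (y ^ 2 + 1 : ℝ) ^ (-((n : ℤ) + (l : ℤ) + 1)) =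
      (y ^ 2 + 1) ^ (-((n : ℤ) + (l : ℤ) + 1) - 2) * ((y ^ 2 + 1) * (y ^ 2 + 1)) := by
    rw [show (-((n : ℤ) + (l : ℤ) + 1)) = (-((n : ℤ) + (l : ℤ) + 1) - 2) + 1 + 1 from by ring,
      zpow_add_one₀ hu, zpow_add_one₀ hu]
    ring
  have hU1 : (y ^ 2 + 1 : ℝ) ^ (-((n : ℤ) + (l : ℤ) + 1) - 1) =
      (y ^ 2 + 1) ^ (-((n : ℤ) + (l : ℤ) + 1) - 2) * (y ^ 2 + 1) := by
    rw [show (-((n : ℤ) + (l : ℤ) + 1) - 1) = (-((n : ℤ) + (l : ℤ) + 1) - 2) + 1 from by ring,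
      zpow_add_one₀ hu]
  rw [hA, hB, hC, hD, hU0, hU1]
  push_cast
  generalize y ^ (2 * (j : ℤ) + (l : ℤ) - 2) = s
  generalize (y ^ 2 + 1 : ℝ) ^ (-((n : ℤ) + (l : ℤ) + 1) - 2) = t
  field_simp
  ring

lemma zetaSol_eq (n l : ℕ) : zetaSol n l = Zfun n l := by
  funext y
  unfold zetaSol hyperF Zfun dcoef cf
  rw [Finset.mul_sum]
  apply Finset.sum_congr rfl
  intro j _
  have h1 : y ^ (2 * (j : ℤ) + (l : ℤ)) = (y ^ 2) ^ j * y ^ l := by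
    rw [show (2 * (j : ℤ) + (l : ℤ)) = ((2 * j + l : ℕ) : ℤ) from by push_cast; ring,
      zpow_natCast, pow_add, pow_mul]
  have h2 : (y ^ 2 + 1 : ℝ) ^ (-((n : ℤ) + (l : ℤ) + 1)) = ((y ^ 2 + 1) ^ (n + l + 1))⁻¹ := by
    rw [show (-((n : ℤ) + (l : ℤ) + 1)) = -((n + l + 1 : ℕ) : ℤ) from by push_cast; ring,
      zpow_neg, zpow_natCast]
  have h3 : (-y ^ 2 : ℝ) ^ j = (-1) ^ j * (y ^ 2) ^ j := by rw [neg_pow]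
  rw [h1, h2, h3]
  ring

/-- **The analytic meson spectrum.** With `M̃² = 4(n+ℓ+1)(n+ℓ+2)`, the function `ζ` above
solves the rescaled radial equation
`ζ'' + (3/y) ζ' + (M̃²/(1+y²)² − ℓ(ℓ+2)/y²) ζ = 0` for all `y > 0`. -/
theorem zetaSol_solves_radial_equation (n l : ℕ) (y : ℝ) (hy : 0 < y) :
    deriv (deriv (zetaSol n l)) y + 3 / y * deriv (zetaSol n l) y +
      ((4 * ((n : ℝ) + (l : ℝ) + 1) * ((n : ℝ) + (l : ℝ) + 2)) / (1 + y ^ 2) ^ 2 -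
          ((l : ℝ) * ((l : ℝ) + 2)) / y ^ 2) * zetaSol n l y = 0 := by
  have hy0 : y ≠ 0 := hy.ne'
  rw [zetaSol_eq n l]
  have hd1 : deriv (Zfun n l) y = Z1 n l y := (hasDerivAt_Zfun n l hy0).deriv
  have hev : deriv (Zfun n l) =ᶠ[nhds y] Z1 n l := by
    have hmem : {x : ℝ | x ≠ 0} ∈ nhds y := isOpen_ne.mem_nhds hy0
    filter_upwards [hmem] with x hx
    exact (hasDerivAt_Zfun n l hx).deriv
  have hd2 : deriv (deriv (Zfun n l)) y = Z2 n l y := by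
    rw [Filter.EventuallyEq.deriv_eq hev]
    exact (hasDerivAt_Z1 n l hy0).deriv
  rw [hd1, hd2]
  unfold Z2 Z1 Zfun
  rw [Finset.mul_sum, Finset.mul_sum, ← Finset.sum_add_distrib, ← Finset.sum_add_distrib]
  have hsum :
      ∑ j ∈ Finset.range (n + 1),
        (dcoef n l j *
            ((2 * (j : ℝ) + (l : ℝ)) * (2 * (j : ℝ) + (l : ℝ) - 1) *
                (y ^ (2 * (j : ℤ) + (l : ℤ) - 2) * (y ^ 2 + 1) ^ (-((n : ℤ) + (l : ℤ) + 1))) +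
              2 * (-((n : ℝ) + (l : ℝ) + 1)) * (2 * (2 * (j : ℝ) + (l : ℝ)) + 1) *
                (y ^ (2 * (j : ℤ) + (l : ℤ)) * (y ^ 2 + 1) ^ (-((n : ℤ) + (l : ℤ) + 1) - 1)) +
              4 * (-((n : ℝ) + (l : ℝ) + 1)) * (-((n : ℝ) + (l : ℝ) + 1) - 1) *
                (y ^ (2 * (j : ℤ) + (l : ℤ) + 2) *
                  (y ^ 2 + 1) ^ (-((n : ℤ) + (l : ℤ) + 1) - 2))) +
          3 / y * (dcoef n l j *
            (((2 * (j : ℤ) + (l : ℤ) : ℤ) : ℝ) *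
                (y ^ (2 * (j : ℤ) + (l : ℤ) - 1) * (y ^ 2 + 1) ^ (-((n : ℤ) + (l : ℤ) + 1))) +
              (2 * ((-((n : ℤ) + (l : ℤ) + 1) : ℤ) : ℝ)) *
                (y ^ (2 * (j : ℤ) + (l : ℤ) + 1) *
                  (y ^ 2 + 1) ^ (-((n : ℤ) + (l : ℤ) + 1) - 1)))) +
          ((4 * ((n : ℝ) + (l : ℝ) + 1) * ((n : ℝ) + (l : ℝ) + 2)) / (1 + y ^ 2) ^ 2 -
              ((l : ℝ) * ((l : ℝ) + 2)) / y ^ 2) *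
            (dcoef n l j *
              (y ^ (2 * (j : ℤ) + (l : ℤ)) * (y ^ 2 + 1) ^ (-((n : ℤ) + (l : ℤ) + 1))))) =
        ∑ j ∈ Finset.range (n + 1), (Gf n l j y - Gf n l (j + 1) y) :=
    Finset.sum_congr rfl fun j _ => key_identity n l j hy
  rw [hsum, Finset.sum_range_sub' (fun j => Gf n l j y) (n + 1), Gf_succ]
  unfold Gf
  push_cast
  ring
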